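/- arXiv:1804.06173 — 2 statements merged into one kernel-verified Lean document; each statement's English description precedes it below -/
import Mathlib

section
/- For the Hurdle function, every positive multiple of w is a strict local optimum: if z = kw with k ≥ 1 and z < n, then h(z-1) < h(z) and h(z+1) < h(z). -/
/-- The Hurdle fitness as a function of the number of zeros `z`,
with hurdle width `w`. -/
noncomputable def hurdle (w z : ℕ) : ℝ :=
  -(⌈(z : ℝ) / w⌉ : ℝ) - ((z % w : ℕ) : ℝ) / w

theorem stmt_5 (n w k : ℕ) (hw : 2 ≤ w) (hk : 1 ≤ k) (hkn : k * w < n) :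
    hurdle w (k * w - 1) < hurdle w (k * w) ∧
    hurdle w (k * w + 1) < hurdle w (k * w) := by
  have hw0 : (0:ℝ) < (w:ℝ) := by
    exact_mod_cast lt_of_lt_of_le (by norm_num) hw
  have hw1 : (1:ℝ) ≤ (w:ℝ) := by exact_mod_cast (show 1 ≤ w by omega)
  have hw2 : (2:ℝ) ≤ (w:ℝ) := by exact_mod_cast hw
  have hkw1 : 1 ≤ k * w := Nat.one_le_iff_ne_zero.mpr (by positivity)
  have hk1 : (1:ℝ) ≤ (k:ℝ) := by exact_mod_cast hk
  have hcast : ((k * w - 1 : ℕ) : ℝ) = (k:ℝ) * w - 1 := by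
    push_cast [Nat.cast_sub hkw1]; ring
  have hmod0 : k * w % w = 0 := Nat.mul_mod_left k w
  have hmod1 : (k * w - 1) % w = w - 1 := by
    have h1 : k * w - 1 = (w - 1) + (k - 1) * w := by
      nlinarith [Nat.sub_add_cancel hk, Nat.sub_add_cancel (show 1 ≤ w by omega),
        Nat.sub_add_cancel hkw1]
    rw [h1, Nat.add_mul_mod_self_right, Nat.mod_eq_of_lt (by omega)]
  have hmod2 : (k * w + 1) % w = 1 := by
    rw [add_comm, Nat.add_mul_mod_self_right, Nat.mod_eq_of_lt (by omega)]
  have hceil0 : ⌈((k*w:ℕ):ℝ)/w⌉ = (k:ℤ) := by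
    push_cast
    rw [mul_div_assoc, div_self (ne_of_gt hw0), mul_one, Int.ceil_natCast]
  have hceil1 : ⌈((k*w-1:ℕ):ℝ)/w⌉ = (k:ℤ) := by
    rw [hcast, Int.ceil_eq_iff]
    constructor
    · rw [lt_div_iff₀ hw0]; push_cast; nlinarith
    · rw [div_le_iff₀ hw0]; push_cast; nlinarith
  have hceil2 : ⌈((k*w+1:ℕ):ℝ)/w⌉ = (k:ℤ) + 1 := by
    push_cast
    rw [Int.ceil_eq_iff]
    constructor
    · rw [lt_div_iff₀ hw0]; push_cast; nlinarith
    · rw [div_le_iff₀ hw0]; push_cast; nlinarith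
  have hwm1 : ((w - 1 : ℕ) : ℝ) = (w:ℝ) - 1 := by
    push_cast [Nat.cast_sub (show 1 ≤ w by omega)]; ring
  have hp1 : (0:ℝ) < ((w:ℝ) - 1) / w := by
    apply div_pos (by linarith [show (2:ℝ) ≤ w from by exact_mod_cast hw]) hw0
  have hp2 : (0:ℝ) < 1 / (w:ℝ) := by positivity
  constructor
  · simp only [hurdle, hceil1, hceil0, hmod1, hmod0, hwm1]
    push_cast
    simp only [zero_div]
    linarith
  · simp only [hurdle, hceil2, hceil0, hmod2, hmod0]
    push_cast
    simp only [zero_div]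
    linarith
end

section
/- For the Hurdle function with hurdle width w, if z = kw is a local optimum with k ≥ 1, then among all z' with h(z') > h(kw), the value z' = (k-1)w is the one of smallest distance |z - z'|; equivalently, h(z') > h(kw) and z' > (k-1)w together with z' ≤ kw is impossible. -/
theorem stmt_6 (w k : ℕ) (hw : 2 ≤ w) (hk : 1 ≤ k) :
    ∀ z' : ℕ, hurdle w z' > hurdle w (k * w) → (k - 1) * w < z' → z' ≤ k * w → False := by
  intro z' h1 h2 h3
  have hw0 : (0:ℝ) < (w:ℝ) := by positivity
  have hkw : hurdle w (k * w) = -(k : ℝ) := by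
    unfold hurdle
    rw [Nat.mul_mod_left]
    push_cast
    rw [mul_div_assoc, div_self (ne_of_gt hw0)]
    simp
  have hceil : ⌈(z' : ℝ) / w⌉ = (k : ℤ) := by
    rw [Int.ceil_eq_iff]
    constructor
    · rw [lt_div_iff₀ hw0]
      have hk1 : ((k - 1 : ℕ) : ℝ) = (k : ℝ) - 1 := by
        have := Nat.cast_sub hk (R := ℝ); simpa using this
      have hr : ((k - 1 : ℕ) : ℝ) * w < z' := by exact_mod_cast h2
      rw [hk1] at hr
      push_cast
      linarith
    · rw [div_le_iff₀ hw0]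
      exact_mod_cast h3
  have hle : hurdle w z' ≤ -(k : ℝ) := by
    unfold hurdle
    rw [hceil]
    have : (0:ℝ) ≤ ((z' % w : ℕ) : ℝ) / w := by positivity
    push_cast
    linarith
  rw [hkw] at h1
  linarith
end
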